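/- Let f : R → R³ be a twice continuously differentiable function with |f'(s)| = 1 for all s, and suppose |f''(s)| ≤ κ for all s. Then for all t > 0 with κt < 2, |f(0) - f(t)| ≥ ∫₀^t (1 - κs) ds = t(1 - κt/2). -/

import Mathlib

open intervalIntegral

theorem stmt10 (f f' f'' : ℝ → EuclideanSpace ℝ (Fin 3)) (κ : ℝ)
    (hf : ∀ s, HasDerivAt f (f' s) s)
    (hf' : ∀ s, HasDerivAt f' (f'' s) s)
    (hcont : Continuous f'')
    (hunit : ∀ s, ‖f' s‖ = 1)
    (hκ : ∀ s, ‖f'' s‖ ≤ κ)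
    (t : ℝ) (ht : 0 < t) (hκt : κ * t < 2) :
    ‖f 0 - f t‖ ≥ t * (1 - κ * t / 2) := by
  have hcf' : Continuous f' := continuous_iff_continuousAt.mpr fun x => (hf' x).continuousAt
  -- Step 1: Lipschitz bound on f'
  have hlip : ∀ s ∈ Set.Icc (0:ℝ) t, ‖f' s - f' 0‖ ≤ κ * s := by
    intro s hs
    have := convex_univ.norm_image_sub_le_of_norm_hasDerivWithin_le
      (f := f') (f' := f'') (C := κ)
      (fun x _ => (hf' x).hasDerivWithinAt) (fun x _ => hκ x)
      (Set.mem_univ 0) (Set.mem_univ s)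
    simpa [abs_of_nonneg hs.1] using this
  -- inner product derivative
  set g : ℝ → ℝ := fun s => inner ℝ (f s) (f' 0) with hg
  have hgd : ∀ s, HasDerivAt g (inner ℝ (f' s) (f' 0) : ℝ) s := by
    intro s
    have := (hf s).inner ℝ (hasDerivAt_const s (f' 0))
    simpa using this
  have hcin : Continuous fun s => (inner ℝ (f' s) (f' 0) : ℝ) :=
    hcf'.inner continuous_const
  have hFTC : g t - g 0 = ∫ s in (0:ℝ)..t, (inner ℝ (f' s) (f' 0) : ℝ) := by
    rw [integral_eq_sub_of_hasDerivAt (fun s _ => hgd s)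
      (hcin.intervalIntegrable 0 t)]
  -- pointwise lower bound on inner
  have hpt : ∀ s ∈ Set.Icc (0:ℝ) t, 1 - κ * s ≤ (inner ℝ (f' s) (f' 0) : ℝ) := by
    intro s hs
    have h1 : (inner ℝ (f' 0) (f' 0) : ℝ) = 1 := by
      rw [real_inner_self_eq_norm_sq, hunit 0]; norm_num
    have h2 : (inner ℝ (f' s - f' 0) (f' 0) : ℝ) ≥ -(κ * s) := by
      have := abs_real_inner_le_norm (f' s - f' 0) (f' 0)
      rw [hunit 0, mul_one] at this
      nlinarith [abs_le.mp this, hlip s hs]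
    have h3 : (inner ℝ (f' s) (f' 0) : ℝ) = inner ℝ (f' s - f' 0) (f' 0) + inner ℝ (f' 0) (f' 0) := by
      rw [← inner_add_left]; norm_num
    linarith [h2, h3.ge, h3.le]
  -- integral comparison
  have hint : (∫ s in (0:ℝ)..t, (1 - κ * s)) ≤ ∫ s in (0:ℝ)..t, (inner ℝ (f' s) (f' 0) : ℝ) := by
    apply integral_mono_on ht.le
    · exact (Continuous.intervalIntegrable (by continuity) 0 t)
    · exact hcin.intervalIntegrable 0 t
    · exact hpt
  have hval : (∫ s in (0:ℝ)..t, (1 - κ * s)) = t * (1 - κ * t / 2) := by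
    rw [intervalIntegral.integral_sub (g := fun s : ℝ => κ * s) intervalIntegrable_const
      (((continuous_const.mul continuous_id') : Continuous fun s : ℝ => κ * s).intervalIntegrable 0 t),
      intervalIntegral.integral_const_mul, integral_id, intervalIntegral.integral_const,
      smul_eq_mul]
    ring
  -- conclude
  have hcs : g t - g 0 ≤ ‖f 0 - f t‖ := by
    have : g t - g 0 = (inner ℝ (f t - f 0) (f' 0) : ℝ) := by
      rw [hg]; simp [inner_sub_left]
    rw [this]
    calc (inner ℝ (f t - f 0) (f' 0) : ℝ) ≤ ‖f t - f 0‖ * ‖f' 0‖ := real_inner_le_norm _ _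
      _ = ‖f 0 - f t‖ := by rw [hunit 0, mul_one, norm_sub_rev]
  linarith [hFTC ▸ (hval ▸ hint), hcs]
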